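/- If ρ is an extremal realisation of a family of configurations F and f : ρ → ρ' is a map of realisations, then ρ' is extremal and the inverse relation g = f⁻¹ is a rigid embedding from the carrier (R',≤') of ρ' to the carrier (R,≤) of ρ, i.e. g is an injective order-preserving total function satisfying g[r'] = [g(r')] for all r' ∈ R' (where [r] denotes the down-closure of r), such that ρ' = ρ ∘ g. -/

import Mathlib

universe u v w

/-- The image of a set under a partial function. -/
def pimage {α : Type u} {β : Type v} (f : α → Option β) (x : Set α) : Set β :=
  {b | ∃ a ∈ x, f a = some b}

/-- A family of configurations over the set of events `A`:
a non-empty family of subsets, whose underlying set is all of `A`,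
closed under unions of finitely compatible subfamilies,
and satisfying the securing-chain condition. -/
structure ConfigFamily (A : Type u) where
  F : Set (Set A)
  nonempty : F.Nonempty
  covers : ∀ a : A, ∃ x ∈ F, a ∈ x
  unionClosed : ∀ X ⊆ F, (∀ Y ⊆ X, Y.Finite → ∃ z ∈ F, ∀ y ∈ Y, y ⊆ z) → ⋃₀ X ∈ F
  secured : ∀ x ∈ F, ∀ e ∈ x, ∃ l : List A, l ≠ [] ∧ l.getLast? = some e ∧
    (∀ a ∈ l, a ∈ x) ∧ ∀ i, 0 < i → i ≤ l.length → {a | a ∈ l.take i} ∈ F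

/-- A causal realisation of the family `C`: a partial order whose
principal lower sets are finite, together with a function to events
sending every down-closed subset to a configuration of the family. -/
structure Realisation {A : Type u} (C : ConfigFamily A) where
  carrier : Type u
  le : carrier → carrier → Prop
  le_refl : ∀ a, le a a
  le_trans : ∀ a b c, le a b → le b c → le a c
  le_antisymm : ∀ a b, le a b → le b a → a = b
  finPast : ∀ e, {e' | le e' e}.Finite
  ρ : carrier → A
  real : ∀ x : Set carrier, (∀ a ∈ x, ∀ b, le b a → b ∈ x) → ρ '' x ∈ C.F

namespace Realisation

variable {A : Type u} {C : ConfigFamily A}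

/-- Down-closed subsets of the carrier of a realisation. -/
def IsDown (r : Realisation C) (x : Set r.carrier) : Prop :=
  ∀ a ∈ x, ∀ b, r.le b a → b ∈ x

/-- The set `[a) = [a] \ {a}` of strict predecessors. -/
def spred (r : Realisation C) (a : r.carrier) : Set r.carrier :=
  {b | r.le b a ∧ b ≠ a}

/-- The carrier has a top element. -/
def HasTop (r : Realisation C) : Prop := ∃ t, ∀ a, r.le a t

end Realisation

/-- A map of realisations: a partial surjective function between the carriers,
preserving down-closed subsets and commuting with the functions to events. -/
structure RealMap {A : Type u} {C : ConfigFamily A} (r r' : Realisation C) where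
  f : r.carrier → Option r'.carrier
  surj : ∀ b, ∃ a, f a = some b
  presDown : ∀ x, r.IsDown x → r'.IsDown (pimage f x)
  commutes : ∀ a b, f a = some b → r.ρ a = r'.ρ b

namespace RealMap

variable {A : Type u} {C : ConfigFamily A} {r r' r₀ : Realisation C}

/-- The map is total. -/
def IsTotal (m : RealMap r r') : Prop := ∀ a, ∃ b, m.f a = some b

/-- The map is an isomorphism of realisations: it has an inverse map of
realisations, given by the inverse relation. -/
def IsIso (m : RealMap r r') : Prop :=
  ∃ m' : RealMap r' r, ∀ a b, m.f a = some b ↔ m'.f b = some a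

/-- `m : r → r₀` is a projection witnessed by `g`: `g` realises the carrier of
`r₀` as a subset of the carrier of `r` with the restricted order and restricted
function to events, and `m` is the inverse relation of this inclusion. -/
def IsProjectionVia (m : RealMap r r₀) (g : r₀.carrier → r.carrier) : Prop :=
  Function.Injective g ∧ (∀ a b, r₀.le a b ↔ r.le (g a) (g b)) ∧
    (∀ a, r₀.ρ a = r.ρ (g a)) ∧ (∀ a b, m.f a = some b ↔ g b = a)

/-- `m` is a projection. -/
def IsProjection (m : RealMap r r₀) : Prop := ∃ g, m.IsProjectionVia g

end RealMap

/-- A realisation is extremal when every total map of realisations from it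
is an isomorphism. -/
def Realisation.Extremal {A : Type u} {C : ConfigFamily A} (r : Realisation C) : Prop :=
  ∀ (r' : Realisation C) (m : RealMap r r'), m.IsTotal → m.IsIso

/-- A prime extremal realisation: extremal with a top element. -/
def Realisation.PrimeExtremal {A : Type u} {C : ConfigFamily A} (r : Realisation C) : Prop :=
  r.Extremal ∧ r.HasTop

/-- Isomorphism of realisations. -/
def RealIso {A : Type u} {C : ConfigFamily A} (r r' : Realisation C) : Prop :=
  ∃ m : RealMap r r', m.IsIso

/-- `m` is the composite of `m₁` followed by `m₂` (as partial functions). -/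
def CompEq {A : Type u} {C : ConfigFamily A} {r r' r'' : Realisation C}
    (m₁ : RealMap r r') (m₂ : RealMap r' r'') (m : RealMap r r'') : Prop :=
  ∀ a c, m.f a = some c ↔ ∃ b, m₁.f a = some b ∧ m₂.f b = some c

section Aux

lemma pimage_finite {α : Type u} {β : Type v} (f : α → Option β) {S : Set α}
    (h : S.Finite) : (pimage f S).Finite := by
  have : pimage f S ⊆ ⋃ a ∈ S, {b | f a = some b} := by
    rintro b ⟨a, ha, hfa⟩
    exact Set.mem_biUnion ha hfa
  refine Set.Finite.subset (Set.Finite.biUnion h ?_) this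
  intro a _
  apply Set.Subsingleton.finite
  intro b hb b' hb'
  simp only [Set.mem_setOf_eq] at hb hb'
  rw [hb] at hb'; exact Option.some_inj.mp hb'

variable {A : Type u} {C : ConfigFamily A}

/-- P1: preimages below. -/
lemma preimage_below {r r' : Realisation C} (f : RealMap r r') {a : r.carrier}
    {b : r'.carrier} (hab : f.f a = some b) {b' : r'.carrier} (h : r'.le b' b) :
    ∃ c, r.le c a ∧ f.f c = some b' := by
  have hdown : r.IsDown {u | r.le u a} := fun u hu v hv => r.le_trans _ _ _ hv hu
  have hmem : b ∈ pimage f.f {u | r.le u a} := ⟨a, r.le_refl a, hab⟩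
  have := f.presDown _ hdown b hmem b' h
  obtain ⟨c, hc, hfc⟩ := this
  exact ⟨c, hc, hfc⟩

/-- Restriction of a realisation to a down-closed set. -/
def Realisation.restrict (r : Realisation C) (D : Set r.carrier) (hD : r.IsDown D) :
    Realisation C where
  carrier := {u : r.carrier // u ∈ D}
  le u v := r.le u.val v.val
  le_refl _ := r.le_refl _
  le_trans _ _ _ h h' := r.le_trans _ _ _ h h'
  le_antisymm _ _ h h' := Subtype.ext (r.le_antisymm _ _ h h')
  finPast e := by
    have : {e' : {u : r.carrier // u ∈ D} | r.le e'.val e.val}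
        = Subtype.val ⁻¹' {u | r.le u e.val} := rfl
    rw [this]
    exact Set.Finite.preimage (Subtype.val_injective.injOn) (r.finPast e.val)
  ρ u := r.ρ u.val
  real x hx := by
    have hdown : r.IsDown (Subtype.val '' x) := by
      rintro v ⟨w, hw, rfl⟩ u hu
      have huD : u ∈ D := hD w.val w.prop u hu
      exact ⟨⟨u, huD⟩, hx w hw ⟨u, huD⟩ hu, rfl⟩
    have := r.real _ hdown
    have heq : (fun u : {u : r.carrier // u ∈ D} => r.ρ u.val) '' x
        = r.ρ '' (Subtype.val '' x) := by
      rw [Set.image_image]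
    rwa [heq]

/-- Composition of maps of realisations. -/
def RealMap.pcomp {p q s : Realisation C} (m₁ : RealMap p q) (m₂ : RealMap q s) :
    RealMap p s where
  f a := (m₁.f a).bind m₂.f
  surj b := by
    obtain ⟨c, hc⟩ := m₂.surj b
    obtain ⟨a, ha⟩ := m₁.surj c
    exact ⟨a, by show (m₁.f a).bind m₂.f = some b; rw [ha]; exact hc⟩
  presDown x hx := by
    have heq : pimage (fun a => (m₁.f a).bind m₂.f) x = pimage m₂.f (pimage m₁.f x) := by
      ext c; constructor
      · rintro ⟨a, ha, hc⟩
        rw [Option.bind_eq_some_iff] at hc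
        obtain ⟨b, hb, hbc⟩ := hc
        exact ⟨b, ⟨a, ha, hb⟩, hbc⟩
      · rintro ⟨b, ⟨a, ha, hb⟩, hbc⟩
        exact ⟨a, ha, by show (m₁.f a).bind m₂.f = some c; rw [hb]; exact hbc⟩
    rw [heq]
    exact m₂.presDown _ (m₁.presDown _ hx)
  commutes a c h := by
    rw [Option.bind_eq_some_iff] at h
    obtain ⟨b, hb, hbc⟩ := h
    rw [m₁.commutes a b hb, m₂.commutes b c hbc]

end Aux
section MainLemma

variable {A : Type u} {C : ConfigFamily A}

theorem main_lemma {r r' : Realisation C} (hr : r.Extremal) (f : RealMap r r') :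
    ∀ a b, f.f a = some b → ∀ c, r.le c a → ∃ b', f.f c = some b' ∧ r'.le b' b := by
  have KEY : ∀ n : ℕ, ∀ a b, f.f a = some b → (r.finPast a).toFinset.card ≤ n →
      ∀ c, r.le c a → ∃ b', f.f c = some b' ∧ r'.le b' b := by
    intro n
    induction n with
    | zero =>
      intro a b _ hcard c _
      exfalso
      have ha : a ∈ (r.finPast a).toFinset := by
        rw [Set.Finite.mem_toFinset]; exact r.le_refl a
      have := Finset.card_pos.mpr ⟨a, ha⟩
      omega
    | succ n ih =>
      intro a b hab hcard
      by_contra hbad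
      push_neg at hbad
      obtain ⟨c₀, hc₀a, hc₀⟩ := hbad
      let Bad : Set r.carrier := {v | r.le v a ∧ ¬ ∃ b', f.f v = some b' ∧ r'.le b' b}
      have hc₀Bad : c₀ ∈ Bad := ⟨hc₀a, by push_neg; exact hc₀⟩
      have haBad : a ∉ Bad := fun h => h.2 ⟨b, hab, r'.le_refl b⟩
      have hcard' : ∀ v, r.le v a → v ≠ a → (r.finPast v).toFinset.card ≤ n := by
        intro v hv hne
        have hsub : (r.finPast v).toFinset ⊂ (r.finPast a).toFinset := by
          constructor
          · intro u hu
            rw [Set.Finite.mem_toFinset] at hu ⊢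
            exact r.le_trans _ _ _ hu hv
          · intro hsup
            have h1 : a ∈ (r.finPast v).toFinset :=
              hsup (by rw [Set.Finite.mem_toFinset]; exact r.le_refl a)
            rw [Set.Finite.mem_toFinset] at h1
            exact hne (r.le_antisymm _ _ hv h1)
        have := Finset.card_lt_card hsub
        omega
      have hIH : ∀ v, r.le v a → v ≠ a → (∃ b', f.f v = some b' ∧ r'.le b' b) →
          ∀ u, r.le u v → ∃ b₀, f.f u = some b₀ ∧ r'.le b₀ b := by
        rintro v hva hne ⟨bv, hbv, hbvb⟩ u huv
        obtain ⟨b₀, hb₀, hle⟩ := ih v bv hbv (hcard' v hva hne) u huv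
        exact ⟨b₀, hb₀, r'.le_trans _ _ _ hle hbvb⟩
      let r₁ : Realisation C := {
        carrier := r.carrier
        le := fun u v => r.le u v ∧ ¬(u ∈ Bad ∧ v = a)
        le_refl := fun v => ⟨r.le_refl v, fun h => haBad (h.2 ▸ h.1)⟩
        le_trans := by
          rintro u v w huv hvw
          refine ⟨r.le_trans _ _ _ huv.1 hvw.1, ?_⟩
          rintro ⟨huB, hwa⟩
          rw [hwa] at hvw
          by_cases hva : v = a
          · exact huv.2 ⟨huB, hva⟩
          · by_cases hvB : v ∈ Bad
            · exact hvw.2 ⟨hvB, rfl⟩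
            · have hgoodv : ∃ b', f.f v = some b' ∧ r'.le b' b := by
                by_contra hng
                exact hvB ⟨hvw.1, hng⟩
              obtain ⟨b₀, hb₀, hle₀⟩ := hIH v hvw.1 hva hgoodv u huv.1
              exact huB.2 ⟨b₀, hb₀, hle₀⟩
        le_antisymm := fun u v h h' => r.le_antisymm u v h.1 h'.1
        finPast := fun e => (r.finPast e).subset (fun u hu => hu.1)
        ρ := r.ρ
        real := by
          intro x hx
          show r.ρ '' x ∈ C.F
          by_cases hup : ∃ w ∈ x, r.le a w ∧ w ≠ a
          · refine r.real x ?_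
            intro v hv u huv
            by_cases hva : v = a
            · subst hva
              obtain ⟨w, hw, haw, hwa⟩ := hup
              exact hx w hw u ⟨r.le_trans _ _ _ huv haw, fun h => hwa h.2⟩
            · exact hx v hv u ⟨huv, fun h => hva h.2⟩
          · by_cases hax : a ∈ x
            · push_neg at hup
              have hC'down : r.IsDown (x \ {a}) := by
                rintro v ⟨hvx, hva⟩ u huv
                rw [Set.mem_singleton_iff] at hva
                have hux : u ∈ x := hx v hvx u ⟨huv, fun h => hva h.2⟩
                refine ⟨hux, ?_⟩
                intro hua
                rw [Set.mem_singleton_iff] at hua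
                subst hua
                exact hva (hup v hvx huv)
              have hsF : r.ρ '' (x \ {a}) ∈ C.F := r.real _ hC'down
              have htF : r'.ρ '' {b' | r'.le b' b} ∈ C.F :=
                r'.real _ (fun u hu v hv => r'.le_trans _ _ _ hv hu)
              have hbdddown : r.IsDown ((x \ {a}) ∪ {u | r.le u a}) := by
                rintro v (hv | hv) u huv
                · exact Or.inl (hC'down v hv u huv)
                · exact Or.inr (r.le_trans _ _ _ huv hv)
              have hbF : r.ρ '' ((x \ {a}) ∪ {u | r.le u a}) ∈ C.F := r.real _ hbdddown
              have hpre : ∀ b', r'.le b' b → ∃ c, r.le c a ∧ f.f c = some b' ∧ c ∈ x := by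
                intro b' hb'
                obtain ⟨c, hca, hfc⟩ := preimage_below f hab hb'
                have hcB : c ∉ Bad := fun hB => hB.2 ⟨b', hfc, hb'⟩
                exact ⟨c, hca, hfc, hx a hax c ⟨hca, fun h => hcB h.1⟩⟩
              have himg : r.ρ '' x = r.ρ '' (x \ {a}) ∪ r'.ρ '' {b' | r'.le b' b} := by
                apply Set.Subset.antisymm
                · rintro _ ⟨v, hv, rfl⟩
                  by_cases hva : v = a
                  · subst hva
                    exact Or.inr ⟨b, r'.le_refl b, (f.commutes v b hab).symm⟩
                  · exact Or.inl ⟨v, ⟨hv, hva⟩, rfl⟩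
                · rintro e (he | he)
                  · obtain ⟨v, hv, rfl⟩ := he; exact ⟨v, hv.1, rfl⟩
                  · obtain ⟨b', hb', rfl⟩ := he
                    obtain ⟨c, _, hfc, hcx⟩ := hpre b' hb'
                    exact ⟨c, hcx, f.commutes c b' hfc⟩
              rw [himg]
              have hu := C.unionClosed {r.ρ '' (x \ {a}), r'.ρ '' {b' | r'.le b' b}}
                (by
                  intro s hs
                  simp only [Set.mem_insert_iff, Set.mem_singleton_iff] at hs
                  rcases hs with rfl | rfl
                  · exact hsF
                  · exact htF)
                (by
                  intro Y hY _
                  refine ⟨r.ρ '' ((x \ {a}) ∪ {u | r.le u a}), hbF, ?_⟩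
                  intro y hy
                  have hy2 := hY hy
                  simp only [Set.mem_insert_iff, Set.mem_singleton_iff] at hy2
                  rcases hy2 with rfl | rfl
                  · exact Set.image_mono Set.subset_union_left
                  · rintro _ ⟨b', hb', rfl⟩
                    obtain ⟨c, hca, hfc, _⟩ := hpre b' hb'
                    exact ⟨c, Or.inr hca, f.commutes c b' hfc⟩)
              rwa [Set.sUnion_pair] at hu
            · refine r.real x ?_
              intro v hv u huv
              have hva : v ≠ a := fun h => hax (h ▸ hv)
              exact hx v hv u ⟨huv, fun h => hva h.2⟩ }
      let idm : RealMap r r₁ := {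
        f := fun u => some u
        surj := fun v => ⟨v, rfl⟩
        presDown := by
          intro x hx v hv u hu
          obtain ⟨w, hw, hww⟩ := hv
          have hwv : w = v := Option.some_inj.mp hww
          subst hwv
          exact ⟨u, hx w hw u hu.1, rfl⟩
        commutes := fun u v h => by obtain rfl : u = v := Option.some_inj.mp h; rfl }
      obtain ⟨m', hm'⟩ := hr r₁ idm (fun u => ⟨u, rfl⟩)
      have hm'id : ∀ u v : r.carrier, m'.f v = some u ↔ u = v := by
        intro u v
        constructor
        · intro h
          exact Option.some_inj.mp ((hm' u v).mpr h)
        · rintro rfl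
          exact (hm' u u).mp rfl
      have hS₁ : r₁.IsDown {u | r₁.le u a} := fun v hv u hu => r₁.le_trans u v a hu hv
      have hSr := m'.presDown _ hS₁
      have hSeq : pimage m'.f {u | r₁.le u a} = {u | r₁.le u a} := by
        ext u; constructor
        · rintro ⟨v, hv, hmv⟩
          rw [hm'id] at hmv; subst hmv; exact hv
        · intro hu; exact ⟨u, hu, (hm'id u u).mpr rfl⟩
      rw [hSeq] at hSr
      have haS : a ∈ {u | r₁.le u a} := r₁.le_refl a
      have hc₀S : c₀ ∈ {u | r₁.le u a} := hSr a haS c₀ hc₀a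
      exact hc₀S.2 ⟨hc₀Bad, rfl⟩
  intro a b hab c hca
  exact KEY (r.finPast a).toFinset.card a b hab (le_refl _) c hca

end MainLemma
section RestrictExtremal

variable {A : Type u} {C : ConfigFamily A}

theorem restrict_extremal (r : Realisation C) (hr : r.Extremal)
    (D : Set r.carrier) (hD : r.IsDown D) : (r.restrict D hD).Extremal := by
  intro r'' m htot
  classical
  have hex : ∀ w : (r.restrict D hD).carrier, ∃ b, m.f w = some b := htot
  let mval : (r.restrict D hD).carrier → r''.carrier := fun w => (hex w).choose
  have hmval : ∀ w, m.f w = some (mval w) := fun w => (hex w).choose_spec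
  let r₂ : Realisation C := {
    carrier := r''.carrier ⊕ {v : r.carrier // v ∉ D}
    le := fun ξ η => match ξ, η with
      | Sum.inl b, Sum.inl b' => r''.le b b'
      | Sum.inl b, Sum.inr v => ∃ w : (r.restrict D hD).carrier, r.le w.val v.val ∧ m.f w = some b
      | Sum.inr u, Sum.inr v => r.le u.val v.val
      | Sum.inr _, Sum.inl _ => False
    le_refl := by
      rintro (b | v)
      · exact r''.le_refl b
      · exact r.le_refl v.val
    le_trans := by
      rintro (b₁ | u) (b₂ | v) (b₃ | w) h12 h23
      · exact r''.le_trans _ _ _ h12 h23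
      · obtain ⟨w₀, hw₀, hmw₀⟩ := h23
        have hSdown : (r.restrict D hD).IsDown {w' : (r.restrict D hD).carrier | r.le w'.val w.val} := by
          intro v₁ hv₁ u₁ hu₁
          exact r.le_trans _ _ _ hu₁ hv₁
        have hpd := m.presDown _ hSdown
        have hb₂ : b₂ ∈ pimage m.f {w' : (r.restrict D hD).carrier | r.le w'.val w.val} :=
          ⟨w₀, hw₀, hmw₀⟩
        obtain ⟨w₁, hw₁, hmw₁⟩ := hpd b₂ hb₂ b₁ h12
        exact ⟨w₁, hw₁, hmw₁⟩
      · exact h23.elim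
      · obtain ⟨w₀, hw₀, hmw₀⟩ := h12
        exact ⟨w₀, r.le_trans _ _ _ hw₀ h23, hmw₀⟩
      · exact h12.elim
      · exact h12.elim
      · exact h23.elim
      · exact r.le_trans _ _ _ h12 h23
    le_antisymm := by
      rintro (b | u) (b' | v) h h'
      · exact congrArg Sum.inl (r''.le_antisymm _ _ h h')
      · exact h'.elim
      · exact h.elim
      · exact congrArg Sum.inr (Subtype.ext (r.le_antisymm _ _ h h'))
    finPast := by
      rintro (b | v)
      · refine Set.Finite.subset ((r''.finPast b).image Sum.inl) ?_
        rintro (b' | u) hξ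
        · exact ⟨b', hξ, rfl⟩
        · exact hξ.elim
      · have h1 : {w : (r.restrict D hD).carrier | r.le w.val v.val}.Finite :=
          Set.Finite.preimage (Subtype.val_injective.injOn) (r.finPast v.val)
        have h2 : {u : {v : r.carrier // v ∉ D} | r.le u.val v.val}.Finite :=
          Set.Finite.preimage (Subtype.val_injective.injOn) (r.finPast v.val)
        refine Set.Finite.subset
          (Set.Finite.union ((pimage_finite m.f h1).image Sum.inl) (h2.image Sum.inr)) ?_
        rintro (b' | u) hξ
        · obtain ⟨w, hwle, hwm⟩ := hξ
          exact Or.inl ⟨b', ⟨w, hwle, hwm⟩, rfl⟩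
        · exact Or.inr ⟨u, hξ, rfl⟩
    ρ := Sum.elim r''.ρ (fun v => r.ρ v.val)
    real := by
      intro x₂ hx₂
      have hydown : r''.IsDown {b | Sum.inl b ∈ x₂} := by
        intro b hb b' hb'
        exact hx₂ (Sum.inl b) hb (Sum.inl b') hb'
      have hTdown : r.IsDown {u | ∃ v, (∃ h : v ∉ D, Sum.inr ⟨v, h⟩ ∈ x₂) ∧ r.le u v} := by
        rintro u ⟨v, hv, huv⟩ u' hu'
        exact ⟨v, hv, r.le_trans _ _ _ hu' huv⟩
      have hkey : r.ρ '' {u | ∃ v, (∃ h : v ∉ D, Sum.inr ⟨v, h⟩ ∈ x₂) ∧ r.le u v}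
          ⊆ r''.ρ '' {b | Sum.inl b ∈ x₂} ∪ r.ρ '' {v | ∃ h : v ∉ D, Sum.inr ⟨v, h⟩ ∈ x₂} := by
        rintro _ ⟨u, ⟨v, ⟨hvD, hvx⟩, huv⟩, rfl⟩
        by_cases huD : u ∈ D
        · left
          have hmem := hx₂ _ hvx (Sum.inl (mval ⟨u, huD⟩)) ⟨⟨u, huD⟩, huv, hmval _⟩
          exact ⟨mval ⟨u, huD⟩, hmem, (m.commutes _ _ (hmval ⟨u, huD⟩)).symm⟩
        · right
          exact ⟨u, ⟨huD, hx₂ _ hvx (Sum.inr ⟨u, huD⟩) huv⟩, rfl⟩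
      have himg : Sum.elim r''.ρ (fun v : {v : r.carrier // v ∉ D} => r.ρ v.val) '' x₂
          = r''.ρ '' {b | Sum.inl b ∈ x₂} ∪ r.ρ '' {v | ∃ h : v ∉ D, Sum.inr ⟨v, h⟩ ∈ x₂} := by
        apply Set.Subset.antisymm
        · rintro _ ⟨(b | u), hξ, rfl⟩
          · exact Or.inl ⟨b, hξ, rfl⟩
          · exact Or.inr ⟨u.val, ⟨u.prop, hξ⟩, rfl⟩
        · rintro e (he | he)
          · obtain ⟨b, hb, rfl⟩ := he; exact ⟨Sum.inl b, hb, rfl⟩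
          · obtain ⟨v, ⟨hvD, hvx⟩, rfl⟩ := he; exact ⟨Sum.inr ⟨v, hvD⟩, hvx, rfl⟩
      show Sum.elim r''.ρ (fun v : {v : r.carrier // v ∉ D} => r.ρ v.val) '' x₂ ∈ C.F
      rw [himg]
      have hyF : r''.ρ '' {b | Sum.inl b ∈ x₂} ∈ C.F := r''.real _ hydown
      have hTF : r.ρ '' {u | ∃ v, (∃ h : v ∉ D, Sum.inr ⟨v, h⟩ ∈ x₂) ∧ r.le u v} ∈ C.F :=
        r.real _ hTdown
      have hDTdown : r.IsDown (D ∪ {u | ∃ v, (∃ h : v ∉ D, Sum.inr ⟨v, h⟩ ∈ x₂) ∧ r.le u v}) := by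
        rintro v (hv | hv) u huv
        · exact Or.inl (hD v hv u huv)
        · exact Or.inr (hTdown v hv u huv)
      have hDTF := r.real _ hDTdown
      have hyb : r''.ρ '' {b | Sum.inl b ∈ x₂}
          ⊆ r.ρ '' (D ∪ {u | ∃ v, (∃ h : v ∉ D, Sum.inr ⟨v, h⟩ ∈ x₂) ∧ r.le u v}) := by
        rintro _ ⟨b, _, rfl⟩
        obtain ⟨w, hw⟩ := m.surj b
        exact ⟨w.val, Or.inl w.prop, m.commutes w b hw⟩
      have heq2 : r''.ρ '' {b | Sum.inl b ∈ x₂} ∪ r.ρ '' {v | ∃ h : v ∉ D, Sum.inr ⟨v, h⟩ ∈ x₂}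
          = r''.ρ '' {b | Sum.inl b ∈ x₂}
            ∪ r.ρ '' {u | ∃ v, (∃ h : v ∉ D, Sum.inr ⟨v, h⟩ ∈ x₂) ∧ r.le u v} := by
        apply Set.Subset.antisymm
        · refine Set.union_subset_union_right _ (Set.image_mono ?_)
          intro v hv
          exact ⟨v, hv, r.le_refl v⟩
        · rintro e (he | he)
          · exact Or.inl he
          · exact hkey he
      rw [heq2]
      have hu := C.unionClosed
        {r''.ρ '' {b | Sum.inl b ∈ x₂},
          r.ρ '' {u | ∃ v, (∃ h : v ∉ D, Sum.inr ⟨v, h⟩ ∈ x₂) ∧ r.le u v}}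
        (by
          intro s hs
          simp only [Set.mem_insert_iff, Set.mem_singleton_iff] at hs
          rcases hs with rfl | rfl
          · exact hyF
          · exact hTF)
        (by
          intro Y hY _
          refine ⟨_, hDTF, ?_⟩
          intro y hy
          have hy2 := hY hy
          simp only [Set.mem_insert_iff, Set.mem_singleton_iff] at hy2
          rcases hy2 with rfl | rfl
          · exact hyb
          · exact Set.image_mono Set.subset_union_right)
      rwa [Set.sUnion_pair] at hu }
  let Mf : r.carrier → Option r₂.carrier :=
    fun u => if h : u ∈ D then some (Sum.inl (mval ⟨u, h⟩)) else some (Sum.inr ⟨u, h⟩)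
  have hMfD : ∀ (u : r.carrier) (h : u ∈ D), Mf u = some (Sum.inl (mval ⟨u, h⟩)) :=
    fun u h => dif_pos h
  have hMfnD : ∀ (u : r.carrier) (h : u ∉ D), Mf u = some (Sum.inr ⟨u, h⟩) :=
    fun u h => dif_neg h
  let M : RealMap r r₂ := {
    f := Mf
    surj := by
      rintro (b | ⟨v, hv⟩)
      · obtain ⟨w, hw⟩ := m.surj b
        refine ⟨w.val, ?_⟩
        rw [hMfD w.val w.prop]
        have h2 := hmval w
        rw [hw] at h2
        exact congrArg (fun t => some (Sum.inl t)) (Option.some_inj.mp h2).symm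
      · exact ⟨v, hMfnD v hv⟩
    presDown := by
      intro x hx η hη ξ hle
      obtain ⟨u, hux, hMu⟩ := hη
      by_cases huD : u ∈ D
      · rw [hMfD u huD] at hMu
        obtain rfl : Sum.inl (mval ⟨u, huD⟩) = η := Option.some_inj.mp hMu
        rcases ξ with b' | u'
        · have hSdown : (r.restrict D hD).IsDown {w : (r.restrict D hD).carrier | w.val ∈ x} := by
            intro w hw w' hw'
            exact hx w.val hw w'.val hw'
          have hpd := m.presDown _ hSdown
          have hmem : mval ⟨u, huD⟩ ∈ pimage m.f {w : (r.restrict D hD).carrier | w.val ∈ x} :=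
            ⟨⟨u, huD⟩, hux, hmval _⟩
          obtain ⟨w, hwx, hmw⟩ := hpd _ hmem b' hle
          refine ⟨w.val, hwx, ?_⟩
          rw [hMfD w.val w.prop]
          have h2 := hmval w
          rw [hmw] at h2
          exact congrArg (fun t => some (Sum.inl t)) (Option.some_inj.mp h2).symm
        · exact hle.elim
      · rw [hMfnD u huD] at hMu
        obtain rfl : Sum.inr ⟨u, huD⟩ = η := Option.some_inj.mp hMu
        rcases ξ with b' | u'
        · obtain ⟨w, hwu, hmw⟩ := hle
          refine ⟨w.val, hx u hux w.val hwu, ?_⟩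
          rw [hMfD w.val w.prop]
          have h2 := hmval w
          rw [hmw] at h2
          exact congrArg (fun t => some (Sum.inl t)) (Option.some_inj.mp h2).symm
        · exact ⟨u'.val, hx u hux u'.val hle, hMfnD u'.val u'.prop⟩
    commutes := by
      intro u η h
      by_cases huD : u ∈ D
      · rw [hMfD u huD] at h
        obtain rfl := Option.some_inj.mp h
        exact m.commutes ⟨u, huD⟩ _ (hmval _)
      · rw [hMfnD u huD] at h
        obtain rfl := Option.some_inj.mp h
        rfl }
  have hMD : ∀ (u : r.carrier) (h : u ∈ D), M.f u = some (Sum.inl (mval ⟨u, h⟩)) := hMfD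
  obtain ⟨M', hM'⟩ := hr r₂ M (by
    intro u
    by_cases h : u ∈ D
    · exact ⟨_, hMfD u h⟩
    · exact ⟨_, hMfnD u h⟩)
  have hm'tot : ∀ b : r''.carrier, ∃ w : (r.restrict D hD).carrier,
      M'.f (Sum.inl b) = some w.val := by
    intro b
    obtain ⟨w, hw⟩ := m.surj b
    refine ⟨w, ?_⟩
    rw [← hM' w.val (Sum.inl b)]
    rw [hMD w.val w.prop]
    have h2 := hmval w
    rw [hw] at h2
    exact congrArg (fun t => some (Sum.inl t)) (Option.some_inj.mp h2).symm
  let m'f : r''.carrier → Option (r.restrict D hD).carrier := fun b => some (hm'tot b).choose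
  have hm'spec : ∀ b, M'.f (Sum.inl b) = some ((hm'tot b).choose).val :=
    fun b => (hm'tot b).choose_spec
  have hm'char : ∀ (b : r''.carrier) (w : (r.restrict D hD).carrier),
      m'f b = some w ↔ M'.f (Sum.inl b) = some w.val := by
    intro b w
    constructor
    · intro h
      have h2 : (hm'tot b).choose = w := Option.some_inj.mp h
      rw [← h2]; exact hm'spec b
    · intro h
      have h3 : w = (hm'tot b).choose :=
        Subtype.ext (Option.some_inj.mp (h.symm.trans (hm'spec b)))
      exact congrArg some h3.symm
  have hMchar : ∀ (w : (r.restrict D hD).carrier) (b : r''.carrier),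
      M.f w.val = some (Sum.inl b) ↔ m.f w = some b := by
    intro w b
    rw [hMD w.val w.prop]
    constructor
    · intro h
      have h3 : mval w = b := Sum.inl.inj (Option.some_inj.mp h)
      rw [hmval w, h3]
    · intro h
      have h2 := hmval w
      rw [h] at h2
      exact congrArg (fun t => some (Sum.inl t)) (Option.some_inj.mp h2).symm
  let m' : RealMap r'' (r.restrict D hD) := {
    f := m'f
    surj := by
      intro w
      refine ⟨mval w, ?_⟩
      rw [hm'char]
      rw [← hM' w.val]
      exact (hMchar w (mval w)).mpr (hmval w)
    presDown := by
      intro y hy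
      have hinl : r₂.IsDown (Sum.inl '' y) := by
        rintro ξ ⟨b, hb, rfl⟩ ξ' hle
        rcases ξ' with b' | u'
        · exact ⟨b', hy b hb b' hle, rfl⟩
        · exact hle.elim
      have hpd := M'.presDown _ hinl
      intro w hw w' hw'
      obtain ⟨b, hb, hmb⟩ := hw
      have hwchar := (hm'char b w).mp hmb
      have hmem : w.val ∈ pimage M'.f (Sum.inl '' y) := ⟨Sum.inl b, ⟨b, hb, rfl⟩, hwchar⟩
      obtain ⟨ξ, hξ, hM'ξ⟩ := hpd _ hmem w'.val hw'
      obtain ⟨b'', hb'', rfl⟩ := hξ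
      exact ⟨b'', hb'', (hm'char b'' w').mpr hM'ξ⟩
    commutes := by
      intro b w h
      exact M'.commutes _ _ ((hm'char b w).mp h) }
  refine ⟨m', ?_⟩
  intro w b
  show m.f w = some b ↔ m'f b = some w
  rw [hm'char]
  rw [← hM' w.val (Sum.inl b)]
  exact (hMchar w b).symm

end RestrictExtremal
/-- Any map of realisations from an extremal realisation has extremal target
and its inverse relation is a rigid embedding of the target carrier into the
source carrier commuting with the realisations. -/
theorem stmt5 {A : Type u} (C : ConfigFamily A) (r r' : Realisation C)
    (hr : r.Extremal) (f : RealMap r r') :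
    r'.Extremal ∧ ∃ g : r'.carrier → r.carrier,
      (∀ a b, f.f a = some b ↔ g b = a) ∧
      Function.Injective g ∧
      (∀ a b, r'.le a b → r.le (g a) (g b)) ∧
      (∀ b, {c | ∃ b', r'.le b' b ∧ g b' = c} = {c | r.le c (g b)}) ∧
      (∀ b, r'.ρ b = r.ρ (g b)) := by
  classical
  have hML := main_lemma hr f
  set D : Set r.carrier := {u | ∃ b, f.f u = some b} with hDdef
  have hD : r.IsDown D := by
    rintro v ⟨b, hb⟩ u hu
    obtain ⟨b', hb', _⟩ := hML v b hb u hu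
    exact ⟨b', hb'⟩
  -- the restriction of r to D and the induced total map to r'
  have hvalDown : ∀ x : Set (r.restrict D hD).carrier,
      (r.restrict D hD).IsDown x → r.IsDown (Subtype.val '' x) := by
    rintro x hx v ⟨w, hw, rfl⟩ u hu
    have huD : u ∈ D := hD w.val w.prop u hu
    exact ⟨⟨u, huD⟩, hx w hw ⟨u, huD⟩ hu, rfl⟩
  let e : RealMap (r.restrict D hD) r' := {
    f := fun w => f.f w.val
    surj := by
      intro b
      obtain ⟨a, ha⟩ := f.surj b
      exact ⟨⟨a, ⟨b, ha⟩⟩, ha⟩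
    presDown := by
      intro x hx
      have heq : pimage (fun w : (r.restrict D hD).carrier => f.f w.val) x
          = pimage f.f (Subtype.val '' x) := by
        ext b; constructor
        · rintro ⟨w, hw, hb⟩
          exact ⟨w.val, ⟨w, hw, rfl⟩, hb⟩
        · rintro ⟨_, ⟨w, hw, rfl⟩, hb⟩
          exact ⟨w, hw, hb⟩
      rw [heq]
      exact f.presDown _ (hvalDown x hx)
    commutes := fun w b h => f.commutes w.val b h }
  have hetot : e.IsTotal := fun w => w.prop
  have heiso := restrict_extremal r hr D hD r' e hetot
  obtain ⟨E', hE'⟩ := heiso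
  have hE'tot : ∀ b : r'.carrier, ∃ w : (r.restrict D hD).carrier, E'.f b = some w := by
    intro b
    obtain ⟨a, ha⟩ := f.surj b
    exact ⟨⟨a, ⟨b, ha⟩⟩, (hE' ⟨a, ⟨b, ha⟩⟩ b).mp ha⟩
  let g : r'.carrier → r.carrier := fun b => ((hE'tot b).choose).val
  have hgE : ∀ b, E'.f b = some (hE'tot b).choose := fun b => (hE'tot b).choose_spec
  have hgiff : ∀ (a : r.carrier) (b : r'.carrier), f.f a = some b ↔ g b = a := by
    intro a b
    constructor
    · intro ha
      have haD : a ∈ D := ⟨b, ha⟩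
      have h1 : E'.f b = some ⟨a, haD⟩ := (hE' ⟨a, haD⟩ b).mp ha
      have h3 : (⟨a, haD⟩ : (r.restrict D hD).carrier) = (hE'tot b).choose :=
        Option.some_inj.mp (h1.symm.trans (hgE b))
      exact congrArg Subtype.val h3.symm
    · rintro rfl
      exact (hE' (hE'tot b).choose b).mpr (hgE b)
  have hfg : ∀ b, f.f (g b) = some b := fun b => (hgiff (g b) b).mpr rfl
  refine ⟨?_, g, hgiff, ?_, ?_, ?_, ?_⟩
  · -- r' is extremal
    intro r'' m₂ h₂tot
    have hctot : (e.pcomp m₂).IsTotal := by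
      intro w
      obtain ⟨b, hb⟩ := hetot w
      obtain ⟨c, hc⟩ := h₂tot b
      refine ⟨c, ?_⟩
      show (e.f w).bind m₂.f = some c
      rw [hb]
      exact hc
    obtain ⟨c', hc'⟩ := restrict_extremal r hr D hD r'' (e.pcomp m₂) hctot
    refine ⟨c'.pcomp e, ?_⟩
    intro b x
    constructor
    · intro hbx
      have hw : e.f (hE'tot b).choose = some b := (hE' (hE'tot b).choose b).mpr (hgE b)
      have hcw : (e.pcomp m₂).f (hE'tot b).choose = some x := by
        show (e.f _).bind m₂.f = some x
        rw [hw]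
        exact hbx
      have h1 : c'.f x = some (hE'tot b).choose := (hc' _ x).mp hcw
      show (c'.f x).bind e.f = some b
      rw [h1]
      exact hw
    · intro hxb
      have h0 : (c'.f x).bind e.f = some b := hxb
      rw [Option.bind_eq_some_iff] at h0
      obtain ⟨w, hw1, hw2⟩ := h0
      have h2 : (e.pcomp m₂).f w = some x := (hc' w x).mpr hw1
      have h3 : (e.f w).bind m₂.f = some x := h2
      rw [hw2] at h3
      exact h3
  · -- injectivity
    intro b b' h
    have h1 := hfg b
    rw [h] at h1
    rw [hfg b'] at h1
    exact (Option.some_inj.mp h1).symm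
  · -- monotone
    intro b' b hle
    obtain ⟨c, hc, hfc⟩ := preimage_below f (hfg b) hle
    have : g b' = c := (hgiff c b').mp hfc
    rw [this]
    exact hc
  · -- rigidity
    intro b
    apply Set.Subset.antisymm
    · rintro _ ⟨b', hb', rfl⟩
      obtain ⟨c, hc, hfc⟩ := preimage_below f (hfg b) hb'
      have h2 : g b' = c := (hgiff c b').mp hfc
      show r.le (g b') (g b)
      rw [h2]
      exact hc
    · intro c hc
      obtain ⟨b', hfc, hb'⟩ := hML (g b) b (hfg b) c hc
      exact ⟨b', hb', (hgiff c b').mp hfc⟩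
  · -- commutes
    intro b
    exact (f.commutes (g b) b (hfg b)).symm
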